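/- Define P_α(λ) = (1/2)·λ/√((1-α+αλ)((1-α)λ² + αλ)) for λ > 0, λ ≠ 1, and α ∈ [0,1]. Then dP_α/dα = (1/4)(λ-1)²λ²(2α-1)/(λ((λ-1)α+1)(-αλ+λ+α))^(3/2), and the unique minimizer of P_α over α ∈ [0,1] is α* = 1/2, with minimum value √λ/(λ+1). -/

import Mathlib

open Real

theorem cauchy_chernoff_bound_minimized_at_half (lam : ℝ) (hlam : 0 < lam) (hne : lam ≠ 1) :
    (∀ α ∈ Set.Icc (0:ℝ) 1,
      deriv (fun α : ℝ =>
          (1 / 2) * lam / Real.sqrt ((1 - α + α * lam) * ((1 - α) * lam ^ 2 + α * lam))) α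
        = (1 / 4) * (lam - 1) ^ 2 * lam ^ 2 * (2 * α - 1)
            / (lam * ((lam - 1) * α + 1) * (-α * lam + lam + α)) ^ ((3:ℝ) / 2)) ∧
    (∀ α ∈ Set.Icc (0:ℝ) 1, α ≠ 1 / 2 →
      (1 / 2) * lam / Real.sqrt ((1 - (1/2:ℝ) + (1/2:ℝ) * lam)
          * ((1 - (1/2:ℝ)) * lam ^ 2 + (1/2:ℝ) * lam))
        < (1 / 2) * lam / Real.sqrt ((1 - α + α * lam) * ((1 - α) * lam ^ 2 + α * lam))) ∧
    (1 / 2) * lam / Real.sqrt ((1 - (1/2:ℝ) + (1/2:ℝ) * lam)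
        * ((1 - (1/2:ℝ)) * lam ^ 2 + (1/2:ℝ) * lam))
      = Real.sqrt lam / (lam + 1) := by
  have hgpos : ∀ α ∈ Set.Icc (0:ℝ) 1,
      0 < (1 - α + α * lam) * ((1 - α) * lam ^ 2 + α * lam) := by
    intro α hα
    obtain ⟨h0, h1⟩ := hα
    have hA : 0 < 1 - α + α * lam := by
      nlinarith [mul_nonneg (mul_nonneg h0 (sub_nonneg.2 h1)) (sq_nonneg (lam - 1)),
        mul_pos hlam hlam]
    have hB : 0 < (1 - α) * lam ^ 2 + α * lam := by
      nlinarith [mul_nonneg (mul_nonneg h0 (sub_nonneg.2 h1)) (sq_nonneg (lam - 1)),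
        mul_pos hlam hlam, mul_nonneg (sub_nonneg.2 h1) (sq_nonneg lam), mul_nonneg h0 hlam.le]
    exact mul_pos hA hB
  refine ⟨?_, ?_, ?_⟩
  · intro α hα
    have hg := hgpos α hα
    set G : ℝ := (1 - α + α * lam) * ((1 - α) * lam ^ 2 + α * lam) with hGdef
    have hs : 0 < Real.sqrt G := Real.sqrt_pos.2 hg
    have h1 : HasDerivAt (fun x : ℝ => 1 - x + x * lam) (-1 + lam) α := by
      exact (((hasDerivAt_id α).const_sub 1).add ((hasDerivAt_id α).mul_const lam)).congr_deriv (by ring)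
    have h2 : HasDerivAt (fun x : ℝ => (1 - x) * lam ^ 2 + x * lam) (-lam ^ 2 + lam) α := by
      have := (((hasDerivAt_id α).const_sub 1).mul_const (lam ^ 2)).add
        ((hasDerivAt_id α).mul_const lam)
      exact this.congr_deriv (by ring)
    have hgd : HasDerivAt
        (fun x : ℝ => (1 - x + x * lam) * ((1 - x) * lam ^ 2 + x * lam))
        (lam * (lam - 1) ^ 2 * (1 - 2 * α)) α := by
      have := h1.mul h2
      exact this.congr_deriv (by ring)
    have hsq : HasDerivAt
        (fun x : ℝ => Real.sqrt ((1 - x + x * lam) * ((1 - x) * lam ^ 2 + x * lam)))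
        (lam * (lam - 1) ^ 2 * (1 - 2 * α) / (2 * Real.sqrt G)) α :=
      hgd.sqrt hg.ne'
    have hd : HasDerivAt
        (fun x : ℝ => (1 / 2) * lam /
          Real.sqrt ((1 - x + x * lam) * ((1 - x) * lam ^ 2 + x * lam)))
        ((0 * Real.sqrt G - (1 / 2) * lam *
            (lam * (lam - 1) ^ 2 * (1 - 2 * α) / (2 * Real.sqrt G))) / Real.sqrt G ^ 2) α :=
      (hasDerivAt_const α ((1 / 2) * lam)).div hsq hs.ne'
    rw [hd.deriv]
    have hDG : lam * ((lam - 1) * α + 1) * (-α * lam + lam + α) = G := by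
      rw [hGdef]; ring
    rw [hDG]
    have hrw : G ^ ((3:ℝ) / 2) = G * Real.sqrt G := by
      rw [show (3:ℝ)/2 = 1 + 1/2 by norm_num, Real.rpow_add hg, Real.rpow_one,
        ← Real.sqrt_eq_rpow]
    rw [hrw]
    have hss : Real.sqrt G * Real.sqrt G = G := Real.mul_self_sqrt hg.le
    field_simp
    rw [Real.sq_sqrt hg.le]; ring
  · intro α hα hα2
    have hg := hgpos α hα
    have hg2 : 0 < (1 - (1/2:ℝ) + (1/2:ℝ) * lam) * ((1 - (1/2:ℝ)) * lam ^ 2 + (1/2:ℝ) * lam) :=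
      hgpos (1/2) (by norm_num)
    have hlt : (1 - α + α * lam) * ((1 - α) * lam ^ 2 + α * lam)
        < (1 - (1/2:ℝ) + (1/2:ℝ) * lam) * ((1 - (1/2:ℝ)) * lam ^ 2 + (1/2:ℝ) * lam) := by
      have h1 : (lam - 1) ≠ 0 := sub_ne_zero.2 hne
      have h2 : (α - 1/2) ≠ 0 := sub_ne_zero.2 hα2
      have key : 0 < lam * (lam - 1) ^ 2 * (α - 1/2) ^ 2 := by positivity
      nlinarith [key]
    have hslt : Real.sqrt ((1 - α + α * lam) * ((1 - α) * lam ^ 2 + α * lam))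
        < Real.sqrt ((1 - (1/2:ℝ) + (1/2:ℝ) * lam) * ((1 - (1/2:ℝ)) * lam ^ 2 + (1/2:ℝ) * lam)) :=
      Real.sqrt_lt_sqrt hg.le hlt
    exact div_lt_div_of_pos_left (by positivity) (Real.sqrt_pos.2 hg) hslt
  · have hval : (1 - (1/2:ℝ) + (1/2:ℝ) * lam) * ((1 - (1/2:ℝ)) * lam ^ 2 + (1/2:ℝ) * lam)
        = (Real.sqrt lam * (lam + 1) / 2) ^ 2 := by
      have := Real.sq_sqrt hlam.le
      nlinarith [this]
    rw [hval, Real.sqrt_sq (by positivity)]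
    have hs : 0 < Real.sqrt lam := Real.sqrt_pos.2 hlam
    have hsq := Real.sq_sqrt hlam.le
    field_simp
    nlinarith [hsq, hs]
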